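/- Let ν be a finite measure on a measurable space α and let τ : α → α be a measurable bijection with measurable inverse such that the pushforward measure τ_*ν and ν are mutually absolutely continuous. Then the set of points x with τ(x) = x and d(τ_*ν)/dν(x) ≠ 1 is ν-null; equivalently, for ν-almost every x, if τ(x) = x then the Radon–Nikodym derivative of τ_*ν with respect to ν equals 1 at x. -/

import Mathlib

open MeasureTheory Set ENNReal

lemma ghys_inv_preimage {α : Type*} [MeasurableSpace α] (τ : α ≃ᵐ α) (C : Set α) :
    τ ⁻¹' (⋂ k : ℕ, ((⇑τ)^[k] ⁻¹' C ∩ (⇑τ.symm)^[k] ⁻¹' C))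
      = ⋂ k : ℕ, ((⇑τ)^[k] ⁻¹' C ∩ (⇑τ.symm)^[k] ⁻¹' C) := by
  ext x
  simp only [mem_preimage, mem_iInter, mem_inter_iff]
  constructor
  · intro h k
    refine ⟨?_, ?_⟩
    · cases k with
      | zero => simpa using (h 1).2
      | succ j =>
        have := (h j).1
        simpa [Function.iterate_succ_apply] using this
    · have := (h (k + 1)).2
      simpa [Function.iterate_succ_apply, τ.symm_apply_apply] using this
  · intro h k
    refine ⟨?_, ?_⟩
    · have := (h (k + 1)).1
      simpa [Function.iterate_succ_apply] using this
    · cases k with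
      | zero => simpa using (h 1).1
      | succ j =>
        have := (h j).2
        simpa [Function.iterate_succ_apply, τ.symm_apply_apply] using this

lemma ghys_null_lt {α : Type*} [MeasurableSpace α] (ν : Measure α) [IsFiniteMeasure ν]
    (τ : α ≃ᵐ α) (hac : ν.map τ ≪ ν) (D : Set α) (hD : MeasurableSet D)
    (hinv : τ ⁻¹' D = D) (hlt : ∀ x ∈ D, (ν.map τ).rnDeriv ν x < 1) :
    ν D = 0 := by
  haveI : IsFiniteMeasure (ν.map τ) := Measure.isFiniteMeasure_map ν τ
  set f := (ν.map τ).rnDeriv ν with hfdef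
  have hf : Measurable f := Measure.measurable_rnDeriv _ _
  have h1 : ∫⁻ x in D, f x ∂ν = ν D := by
    rw [Measure.setLIntegral_rnDeriv hac D, MeasurableEquiv.map_apply, hinv]
  have hfin : ∫⁻ x in D, f x ∂ν ≠ ⊤ := by rw [h1]; exact (measure_lt_top ν D).ne
  have hle : f ≤ᵐ[ν.restrict D] fun _ => (1 : ℝ≥0∞) :=
    ae_restrict_of_forall_mem hD fun x hx => (hlt x hx).le
  have h2 : ∫⁻ x in D, ((1 : ℝ≥0∞) - f x) ∂ν = 0 := by
    rw [lintegral_sub hf hfin hle, h1, lintegral_const]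
    simp [Measure.restrict_apply_univ]
  have h3 : ∀ᵐ x ∂ν.restrict D, (1 : ℝ≥0∞) - f x = 0 :=
    (lintegral_eq_zero_iff (measurable_const.sub hf)).mp h2
  have h4 : ν.restrict D {x | ¬((1 : ℝ≥0∞) - f x = 0)} = 0 := ae_iff.mp h3
  have h5 : D ⊆ {x | ¬((1 : ℝ≥0∞) - f x = 0)} := by
    intro x hx
    simp only [mem_setOf_eq, tsub_eq_zero_iff_le]
    exact not_le.mpr (hlt x hx)
  refine le_antisymm ?_ zero_le
  calc ν D = ν.restrict D D := (Measure.restrict_apply_self _ _).symm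
    _ ≤ ν.restrict D {x | ¬((1 : ℝ≥0∞) - f x = 0)} := measure_mono h5
    _ = 0 := h4

lemma ghys_null_gt {α : Type*} [MeasurableSpace α] (ν : Measure α) [IsFiniteMeasure ν]
    (τ : α ≃ᵐ α) (hac : ν.map τ ≪ ν) (D : Set α) (hD : MeasurableSet D)
    (hinv : τ ⁻¹' D = D) (hgt : ∀ x ∈ D, 1 < (ν.map τ).rnDeriv ν x) :
    ν D = 0 := by
  haveI : IsFiniteMeasure (ν.map τ) := Measure.isFiniteMeasure_map ν τ
  set f := (ν.map τ).rnDeriv ν with hfdef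
  have hf : Measurable f := Measure.measurable_rnDeriv _ _
  have h1 : ∫⁻ x in D, f x ∂ν = ν D := by
    rw [Measure.setLIntegral_rnDeriv hac D, MeasurableEquiv.map_apply, hinv]
  have hone : ∫⁻ _ in D, (1 : ℝ≥0∞) ∂ν = ν D := by
    rw [lintegral_const]; simp [Measure.restrict_apply_univ]
  have hfin : ∫⁻ _ in D, (1 : ℝ≥0∞) ∂ν ≠ ⊤ := by rw [hone]; exact (measure_lt_top ν D).ne
  have hle : (fun _ => (1 : ℝ≥0∞)) ≤ᵐ[ν.restrict D] f :=
    ae_restrict_of_forall_mem hD fun x hx => (hgt x hx).le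
  have h2 : ∫⁻ x in D, (f x - 1) ∂ν = 0 := by
    rw [lintegral_sub measurable_const hfin hle, h1, hone]
    simp
  have h3 : ∀ᵐ x ∂ν.restrict D, f x - 1 = 0 :=
    (lintegral_eq_zero_iff (hf.sub measurable_const)).mp h2
  have h4 : ν.restrict D {x | ¬(f x - 1 = 0)} = 0 := ae_iff.mp h3
  have h5 : D ⊆ {x | ¬(f x - 1 = 0)} := by
    intro x hx
    simp only [mem_setOf_eq, tsub_eq_zero_iff_le]
    exact not_le.mpr (hgt x hx)
  refine le_antisymm ?_ zero_le
  calc ν D = ν.restrict D D := (Measure.restrict_apply_self _ _).symm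
    _ ≤ ν.restrict D {x | ¬(f x - 1 = 0)} := measure_mono h5
    _ = 0 := h4

/-- Let `ν` be a finite measure and `τ` a measurable bijection with measurable inverse
(a measurable equivalence) such that `τ_*ν` and `ν` are mutually absolutely continuous.
Then the set of fixed points of `τ` at which the Radon–Nikodym derivative `d(τ_*ν)/dν`
differs from `1` is `ν`-null; equivalently, for `ν`-almost every `x`, if `τ x = x` then
`d(τ_*ν)/dν (x) = 1`. -/
theorem rnDeriv_eq_one_at_fixed_points
    {α : Type*} [MeasurableSpace α] (ν : Measure α) [IsFiniteMeasure ν]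
    (τ : α ≃ᵐ α)
    (hac : ν.map τ ≪ ν) (hac' : ν ≪ ν.map τ) :
    ν {x | τ x = x ∧ (ν.map τ).rnDeriv ν x ≠ 1} = 0 := by
  set f := (ν.map τ).rnDeriv ν with hfdef
  have hf : Measurable f := Measure.measurable_rnDeriv _ _
  set Clt : Set α := {x | f x < 1} with hClt
  set Cgt : Set α := {x | 1 < f x} with hCgt
  have hCltm : MeasurableSet Clt := measurableSet_lt hf measurable_const
  have hCgtm : MeasurableSet Cgt := measurableSet_lt measurable_const hf
  set Dlt : Set α := ⋂ k : ℕ, ((⇑τ)^[k] ⁻¹' Clt ∩ (⇑τ.symm)^[k] ⁻¹' Clt) with hDlt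
  set Dgt : Set α := ⋂ k : ℕ, ((⇑τ)^[k] ⁻¹' Cgt ∩ (⇑τ.symm)^[k] ⁻¹' Cgt) with hDgt
  have hmeas : ∀ (C : Set α), MeasurableSet C →
      MeasurableSet (⋂ k : ℕ, ((⇑τ)^[k] ⁻¹' C ∩ (⇑τ.symm)^[k] ⁻¹' C)) := by
    intro C hC
    exact MeasurableSet.iInter fun k =>
      ((τ.measurable.iterate k) hC).inter ((τ.symm.measurable.iterate k) hC)
  have hDltnull : ν Dlt = 0 := by
    refine ghys_null_lt ν τ hac Dlt (hmeas _ hCltm) (ghys_inv_preimage τ Clt) ?_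
    intro x hx
    have := mem_iInter.mp hx 0
    simpa [hClt, hfdef] using this.1
  have hDgtnull : ν Dgt = 0 := by
    refine ghys_null_gt ν τ hac Dgt (hmeas _ hCgtm) (ghys_inv_preimage τ Cgt) ?_
    intro x hx
    have := mem_iInter.mp hx 0
    simpa [hCgt, hfdef] using this.1
  have hsub : {x | τ x = x ∧ f x ≠ 1} ⊆ Dlt ∪ Dgt := by
    intro x hx
    obtain ⟨hfix, hne⟩ := hx
    have hfix' : τ.symm x = x := by
      conv_lhs => rw [← hfix]
      exact τ.symm_apply_apply x
    have hiter : ∀ k : ℕ, (⇑τ)^[k] x = x := fun k => Function.iterate_fixed hfix k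
    have hiter' : ∀ k : ℕ, (⇑τ.symm)^[k] x = x := fun k => Function.iterate_fixed hfix' k
    rcases lt_or_gt_of_ne hne with h | h
    · left
      refine mem_iInter.mpr fun k => ⟨?_, ?_⟩ <;>
        simp [mem_preimage, hiter k, hiter' k, hClt, h]
    · right
      refine mem_iInter.mpr fun k => ⟨?_, ?_⟩ <;>
        simp [mem_preimage, hiter k, hiter' k, hCgt, h]
  exact measure_mono_null hsub (measure_union_null hDltnull hDgtnull)
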